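/- The map ρ ↦ (ρ_f, ρ_s), where ρ_f = Pρ + ρP − PρP and ρ_s = (1−P)ρ(1−P) + (Σ_k Γ_k)^{-1} Σ_k Γ_k Q_k ρ Q_k†, is injective on Hermitian operators; explicitly, ρ can be recovered as ρ = ρ_s + ρ_f − (Σ_k Γ_k)^{-1} Σ_k Γ_k Q_k ρ_f Q_k†. -/

import Mathlib

open Matrix

noncomputable section

abbrev Mat (N : ℕ) := Matrix (Fin (N + 1)) (Fin (N + 1)) ℂ

/-- excited state index -/
def eV (N : ℕ) : Fin (N + 1) := 0

/-- jump operator `Q_k = |g_k⟩⟨e|` -/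
def Q (N : ℕ) (k : Fin N) : Mat N := single k.succ (eV N) 1

/-- projector `P = |e⟩⟨e|` -/
def P (N : ℕ) : Mat N := single (eV N) (eV N) 1

/-- fast part `ρ_f = Pρ + ρP − PρP` -/
def rhoF (N : ℕ) (ρ : Mat N) : Mat N := P N * ρ + ρ * P N - P N * ρ * P N

/-- slow part `ρ_s = (1−P)ρ(1−P) + (Σ Γ)⁻¹ Σ Γ_k Q_k ρ Q_k†` -/
def rhoS (N : ℕ) (Γ : Fin N → ℝ) (ρ : Mat N) : Mat N :=
  (1 - P N) * ρ * (1 - P N) +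
    (((∑ k, Γ k : ℝ) : ℂ))⁻¹ • ∑ k, (Γ k : ℂ) • (Q N k * ρ * (Q N k)ᴴ)

lemma Q_conjT (N : ℕ) (k : Fin N) : (Q N k)ᴴ = single (eV N) k.succ 1 := by
  ext a b
  simp only [Q, conjTranspose_apply, single, of_apply]
  by_cases h1 : a = eV N <;> by_cases h2 : b = k.succ <;>
    simp [h1, h2, and_comm, eq_comm]

lemma QP (N : ℕ) (k : Fin N) : Q N k * P N = Q N k := by
  simp [Q, P]

lemma PQ (N : ℕ) (k : Fin N) : P N * (Q N k)ᴴ = (Q N k)ᴴ := by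
  simp [Q_conjT, P]

lemma QrhoF (N : ℕ) (k : Fin N) (ρ : Mat N) :
    Q N k * rhoF N ρ * (Q N k)ᴴ = Q N k * ρ * (Q N k)ᴴ := by
  simp only [rhoF, mul_sub, mul_add, sub_mul, add_mul, ← mul_assoc, QP, mul_assoc, PQ]
  abel

lemma recon (N : ℕ) (Γ : Fin N → ℝ) (ρ : Mat N) :
    ρ = rhoS N Γ ρ + rhoF N ρ -
        (((∑ k, Γ k : ℝ) : ℂ))⁻¹ • ∑ k, (Γ k : ℂ) • (Q N k * rhoF N ρ * (Q N k)ᴴ) := by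
  simp only [rhoS, QrhoF]
  have h : ∀ a c f : Mat N, a + c + f - c = a + f := fun a c f => by abel
  rw [h]
  simp only [rhoF]
  noncomm_ring

theorem stmt1 (N : ℕ) (Γ : Fin N → ℝ) (hΓ : ∀ k, 0 < Γ k) :
    (∀ ρ : Mat N, ρᴴ = ρ →
      ρ = rhoS N Γ ρ + rhoF N ρ -
        (((∑ k, Γ k : ℝ) : ℂ))⁻¹ • ∑ k, (Γ k : ℂ) • (Q N k * rhoF N ρ * (Q N k)ᴴ)) ∧
    (∀ ρ₁ ρ₂ : Mat N, ρ₁ᴴ = ρ₁ → ρ₂ᴴ = ρ₂ →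
      rhoF N ρ₁ = rhoF N ρ₂ → rhoS N Γ ρ₁ = rhoS N Γ ρ₂ → ρ₁ = ρ₂) := by
  refine ⟨fun ρ _ => recon N Γ ρ, fun ρ₁ ρ₂ _ _ hF hS => ?_⟩
  rw [recon N Γ ρ₁, recon N Γ ρ₂, hF, hS]

end
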